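/- Let L ≥ 2 and m ≥ 1 be integers. Then the transition coefficients E(m,0; a, ε, L) admit the following elementary closed forms in the three distinguished cases: E(m,0; 1/2, 1, L) = −2(m+4L−3)(L+m) / [(2L+m)(2L+m−1)(2L+m−2)] (type C); E(m,0; 1/2, 1/2, L) = −(2m+6L−5) / [(2L+m−1)(2L+m−2)] (type B); E(m,0; −1/2, 0, L) = −2/(2L+m−2) (type D). -/

import Mathlib

open Finset

/-- Pochhammer symbol over `ℝ`. -/
noncomputable def pochR (x : ℝ) (n : ℕ) : ℝ := (ascPochhammer ℝ n).eval x

/-- The transition coefficient `E(m,0; a, ε, L)` for `m ≥ 1` (Theorem 5.2 of the paper):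
`E(m,0) = −[2(L+ε+m−1)(a+1)/(L(L+a)(2ε+1))]·
₄F₃[1−m, 1, a+2, 2L+2ε+m−1; L+1, L+a+1, 2ε+2 | 1]`. -/
noncomputable def Ecoef0 (a eps : ℝ) (L m : ℕ) : ℝ :=
  -(2 * ((L:ℝ) + eps + (m:ℝ) - 1) * (a + 1) / ((L:ℝ) * ((L:ℝ) + a) * (2*eps + 1))) *
    ∑ j ∈ Finset.range m,
      (pochR (1 - (m:ℝ)) j * pochR (a + 2) j * pochR (2*(L:ℝ) + 2*eps + (m:ℝ) - 1) j) /
      (pochR ((L:ℝ) + 1) j * pochR ((L:ℝ) + a + 1) j * pochR (2*eps + 2) j)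


lemma pochR_zero (x : ℝ) : pochR x 0 = 1 := by simp [pochR]

lemma pochR_succ (x : ℝ) (n : ℕ) : pochR x (n+1) = pochR x n * (x + n) := by
  simp [pochR, ascPochhammer_succ_right]

lemma pochR_succ' (x : ℝ) (n : ℕ) : pochR x (n+1) = x * pochR (x+1) n := by
  simp [pochR, ascPochhammer_succ_left, Polynomial.eval_comp]

lemma pochR_shift (x : ℝ) (n : ℕ) : pochR x n * (x + n) = x * pochR (x+1) n := by
  rw [← pochR_succ, pochR_succ']

lemma pochR_pos {x : ℝ} (hx : 0 < x) (n : ℕ) : 0 < pochR x n := by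
  induction n with
  | zero => simp [pochR_zero]
  | succ k ih => rw [pochR_succ]; positivity

lemma pochR_neg (m j : ℕ) : (m:ℝ) * pochR (1 - (m:ℝ)) j = ((m:ℝ) - j) * pochR (-(m:ℝ)) j := by
  induction j with
  | zero => rw [pochR_zero, pochR_zero]; push_cast; ring
  | succ k ih =>
      rw [pochR_succ, pochR_succ]
      push_cast
      linear_combination (1 - (m:ℝ) + k) * ih

lemma pochR_one_sub_self (m : ℕ) (hm : 1 ≤ m) : pochR (1 - (m:ℝ)) m = 0 := by
  obtain ⟨k, rfl⟩ : ∃ k, m = k + 1 := ⟨m - 1, (Nat.succ_pred_eq_of_pos hm).symm⟩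
  rw [pochR_succ]
  have h : (1 - ((k+1:ℕ):ℝ) + (k:ℕ)) = 0 := by push_cast; ring
  rw [h, mul_zero]

lemma pochR_negnat_succ (m : ℕ) : pochR (-(m:ℝ)) (m+1) = 0 := by
  rw [pochR_succ]; simp

noncomputable def TCc (L m j : ℕ) : ℝ :=
  pochR (1 - (m:ℝ)) j * pochR (5/2) j * pochR (2*(L:ℝ) + (m:ℝ) + 1) j /
  (pochR ((L:ℝ) + 1) j * pochR ((L:ℝ) + 3/2) j * pochR 4 j)

noncomputable def UC (L m j : ℕ) : ℝ :=
  pochR (-(m:ℝ)) j * pochR (5/2) j * pochR (2*(L:ℝ) + (m:ℝ) + 2) j /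
  (pochR ((L:ℝ) + 1) j * pochR ((L:ℝ) + 3/2) j * pochR 4 j)

noncomputable def QC (L m : ℕ) (x : ℝ) : ℝ :=
  -(3*(L:ℝ)*(2*(L:ℝ)+1) + (2*(L:ℝ)^2+13*(L:ℝ)+3)*x + (4*(L:ℝ)+7)*x^2 + 2*x^3) /
    (((m:ℝ)+3)*((m:ℝ)+(L:ℝ)))

noncomputable def GC (L m j : ℕ) : ℝ := QC L m (j:ℝ) * UC L m j / (2*(L:ℝ) + (m:ℝ) + 1 + (j:ℝ))

noncomputable def c0C (L m : ℕ) : ℝ :=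
  -((m:ℝ)*((m:ℝ)+(L:ℝ)+1)*((m:ℝ)+2*(L:ℝ)-2)) / (((m:ℝ)+3)*((m:ℝ)+(L:ℝ))*((m:ℝ)+2*(L:ℝ)+1))

lemma TC_succ (L m j : ℕ) : TCc L (m+1) j = UC L m j := by
  unfold TCc UC
  have h1 : (1 - ((m+1:ℕ):ℝ)) = -(m:ℝ) := by push_cast; ring
  have h2 : (2*(L:ℝ) + ((m+1:ℕ):ℝ) + 1) = 2*(L:ℝ) + (m:ℝ) + 2 := by push_cast; ring
  rw [h1, h2]

set_option maxHeartbeats 2000000 in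
lemma pointC (L m j : ℕ) (hL : 2 ≤ L) (hm : 1 ≤ m) :
    c0C L m * TCc L m j + UC L m j = GC L m (j+1) - GC L m j := by
  have hL' : (2:ℝ) ≤ (L:ℝ) := by exact_mod_cast hL
  have hm' : (1:ℝ) ≤ (m:ℝ) := by exact_mod_cast hm
  have hj : (0:ℝ) ≤ (j:ℝ) := Nat.cast_nonneg j
  have hm0 : (m:ℝ) ≠ 0 := by linarith
  have hcj : (2*(L:ℝ) + (m:ℝ) + 1 + (j:ℝ)) ≠ 0 := by linarith
  have hcj1 : (2*(L:ℝ) + (m:ℝ) + 1 + ((j:ℝ)+1)) ≠ 0 := by linarith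
  have hD1 : pochR ((L:ℝ) + 1) j ≠ 0 := ne_of_gt (pochR_pos (by linarith) j)
  have hD2 : pochR ((L:ℝ) + 3/2) j ≠ 0 := ne_of_gt (pochR_pos (by linarith) j)
  have hD3 : pochR (4:ℝ) j ≠ 0 := ne_of_gt (pochR_pos (by norm_num) j)
  have hden1 : ((m:ℝ)+3) ≠ 0 := by linarith
  have hden2 : ((m:ℝ)+(L:ℝ)) ≠ 0 := by linarith
  have hden3 : ((m:ℝ)+2*(L:ℝ)+1) ≠ 0 := by linarith
  have h1 : pochR (1 - (m:ℝ)) j = ((m:ℝ) - (j:ℝ)) * pochR (-(m:ℝ)) j / (m:ℝ) := by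
    rw [eq_div_iff hm0]; linear_combination pochR_neg m j
  have h2 : pochR (2*(L:ℝ) + (m:ℝ) + 1) j
      = (2*(L:ℝ) + (m:ℝ) + 1) * pochR (2*(L:ℝ) + (m:ℝ) + 2) j / (2*(L:ℝ) + (m:ℝ) + 1 + (j:ℝ)) := by
    have hs := pochR_shift (2*(L:ℝ) + (m:ℝ) + 1) j
    rw [show (2*(L:ℝ) + (m:ℝ) + 1 + 1) = 2*(L:ℝ) + (m:ℝ) + 2 from by ring] at hs
    rw [eq_div_iff hcj]; linear_combination hs
  unfold GC UC TCc QC c0C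
  rw [h1, h2]
  simp only [pochR_succ]
  push_cast
  generalize pochR (-(m:ℝ)) j = A
  generalize pochR (5/2 : ℝ) j = B
  generalize pochR (2*(L:ℝ) + (m:ℝ) + 2) j = C
  generalize hA1 : pochR ((L:ℝ) + 1) j = D1 at hD1 ⊢
  generalize hA2 : pochR ((L:ℝ) + 3/2) j = D2 at hD2 ⊢
  generalize hA3 : pochR (4:ℝ) j = D3 at hD3 ⊢
  field_simp
  ring

lemma TC_diag (L m : ℕ) (hm : 1 ≤ m) : TCc L m m = 0 := by
  unfold TCc
  rw [pochR_one_sub_self m hm]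
  simp

lemma UC_top (L m : ℕ) : UC L m (m+1) = 0 := by
  unfold UC
  rw [pochR_negnat_succ]
  simp

lemma UC_zero (L m : ℕ) : UC L m 0 = 1 := by
  unfold UC
  simp [pochR_zero]

lemma sumC_rec (L m : ℕ) (hL : 2 ≤ L) (hm : 1 ≤ m) :
    ∑ j ∈ Finset.range (m+1), TCc L (m+1) j
      = -(QC L m 0 / (2*(L:ℝ) + (m:ℝ) + 1)) - c0C L m * ∑ j ∈ Finset.range m, TCc L m j := by
  have key : ∀ j, TCc L (m+1) j = (GC L m (j+1) - GC L m j) - c0C L m * TCc L m j := by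
    intro j
    have := pointC L m j hL hm
    rw [TC_succ]
    linarith [this]
  rw [Finset.sum_congr rfl (fun j _ => key j), Finset.sum_sub_distrib, Finset.sum_range_sub,
    ← Finset.mul_sum, Finset.sum_range_succ, TC_diag L m hm]
  have hG1 : GC L m (m+1) = 0 := by unfold GC; rw [UC_top]; simp
  have hG0 : GC L m 0 = QC L m 0 / (2*(L:ℝ) + (m:ℝ) + 1) := by
    unfold GC; rw [UC_zero]; push_cast; ring
  rw [hG1, hG0]
  push_cast
  ring

lemma sumC_closed (L : ℕ) (hL : 2 ≤ L) :
    ∀ m : ℕ, 1 ≤ m → ∑ j ∈ Finset.range m, TCc L m j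
      = (L:ℝ)*(2*(L:ℝ)+1)*((m:ℝ)+4*(L:ℝ)-3) /
        ((2*(L:ℝ)+(m:ℝ))*(2*(L:ℝ)+(m:ℝ)-1)*(2*(L:ℝ)+(m:ℝ)-2)) := by
  have hL' : (2:ℝ) ≤ (L:ℝ) := by exact_mod_cast hL
  intro m
  induction m with
  | zero => omega
  | succ k ih =>
      intro _
      by_cases hk : 1 ≤ k
      · have hk' : (1:ℝ) ≤ (k:ℝ) := by exact_mod_cast hk
        rw [sumC_rec L k hL hk, ih hk]
        unfold QC c0C
        push_cast
        have d1 : ((k:ℝ)+3) ≠ 0 := by linarith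
        have d2 : ((k:ℝ)+(L:ℝ)) ≠ 0 := by linarith
        have d3 : (2*(L:ℝ)+(k:ℝ)+1) ≠ 0 := by linarith
        have d4 : ((k:ℝ)+2*(L:ℝ)+1) ≠ 0 := by linarith
        have d5 : (2*(L:ℝ)+(k:ℝ)) ≠ 0 := by linarith
        have d6 : (2*(L:ℝ)+(k:ℝ)-1) ≠ 0 := by linarith
        have d7 : (2*(L:ℝ)+(k:ℝ)-2) ≠ 0 := by linarith
        have d8 : (2*(L:ℝ)+((k:ℝ)+1)) ≠ 0 := by linarith
        have d9 : (2*(L:ℝ)+((k:ℝ)+1)-1) ≠ 0 := by linarith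
        have d10 : (2*(L:ℝ)+((k:ℝ)+1)-2) ≠ 0 := by linarith
        have e1 : (L:ℝ)*2+k-1 ≠ 0 := by linarith
        have e2 : (L:ℝ)*2+k-2 ≠ 0 := by linarith
        have e3 : (L:ℝ)*2+(k+1)-1 ≠ 0 := by linarith
        have e4 : (L:ℝ)*2+(k+1)-2 ≠ 0 := by linarith
        field_simp
        ring
      · have hk0 : k = 0 := by omega
        subst hk0
        rw [Finset.sum_range_one]
        unfold TCc
        simp only [pochR_zero]
        push_cast
        have d7 : (2*(L:ℝ)+1) ≠ 0 := by linarith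
        have d8 : (2*(L:ℝ)+1-1) ≠ 0 := by linarith
        have d9 : (2*(L:ℝ)+1-2) ≠ 0 := by linarith
        have e1 : (L:ℝ)*2+1-2 ≠ 0 := by linarith
        have e2 : (L:ℝ) ≠ 0 := by linarith
        field_simp
        ring

lemma Ecoef0_C (L m : ℕ) (hL : 2 ≤ L) (hm : 1 ≤ m) :
    Ecoef0 (1/2) 1 L m
      = -(2 * ((m:ℝ) + 4*(L:ℝ) - 3) * ((L:ℝ) + (m:ℝ)) /
          ((2*(L:ℝ) + (m:ℝ)) * (2*(L:ℝ) + (m:ℝ) - 1) * (2*(L:ℝ) + (m:ℝ) - 2))) := by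
  have hL' : (2:ℝ) ≤ (L:ℝ) := by exact_mod_cast hL
  have hm' : (1:ℝ) ≤ (m:ℝ) := by exact_mod_cast hm
  have hsum : (∑ j ∈ Finset.range m,
      (pochR (1 - (m:ℝ)) j * pochR ((1/2 : ℝ) + 2) j *
        pochR (2*(L:ℝ) + 2*(1:ℝ) + (m:ℝ) - 1) j) /
      (pochR ((L:ℝ) + 1) j * pochR ((L:ℝ) + (1/2 : ℝ) + 1) j * pochR (2*(1:ℝ) + 2) j))
      = ∑ j ∈ Finset.range m, TCc L m j := by
    apply Finset.sum_congr rfl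
    intro j _
    unfold TCc
    norm_num
    ring_nf
  rw [Ecoef0, hsum, sumC_closed L hL m hm]
  rw [neg_mul, neg_inj, div_mul_div_comm, div_eq_div_iff]
  · ring
  · have g1 : (0:ℝ) < (L:ℝ) := by linarith
    have g2 : (0:ℝ) < (L:ℝ) + (1/2 : ℝ) := by linarith
    have g3 : (0:ℝ) < (2*(1:ℝ)+1) := by norm_num
    have g4 : (0:ℝ) < (2*(L:ℝ)+(m:ℝ)) := by linarith
    have g5 : (0:ℝ) < (2*(L:ℝ)+(m:ℝ)-1) := by linarith
    have g6 : (0:ℝ) < (2*(L:ℝ)+(m:ℝ)-2) := by linarith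
    exact ne_of_gt (by positivity)
  · have g4 : (0:ℝ) < (2*(L:ℝ)+(m:ℝ)) := by linarith
    have g5 : (0:ℝ) < (2*(L:ℝ)+(m:ℝ)-1) := by linarith
    have g6 : (0:ℝ) < (2*(L:ℝ)+(m:ℝ)-2) := by linarith
    exact ne_of_gt (by positivity)

noncomputable def TBb (L m j : ℕ) : ℝ :=
  pochR (1 - (m:ℝ)) j * pochR (5/2) j * pochR (2*(L:ℝ) + (m:ℝ)) j /
  (pochR ((L:ℝ) + 1) j * pochR ((L:ℝ) + 3/2) j * pochR 3 j)

noncomputable def UB (L m j : ℕ) : ℝ :=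
  pochR (-(m:ℝ)) j * pochR (5/2) j * pochR (2*(L:ℝ) + (m:ℝ) + 1) j /
  (pochR ((L:ℝ) + 1) j * pochR ((L:ℝ) + 3/2) j * pochR 3 j)

noncomputable def QB (L m : ℕ) (x : ℝ) : ℝ :=
  -(2*(2*(L:ℝ)*(2*(L:ℝ)+1) + (2*(L:ℝ)^2+9*(L:ℝ)+2)*x + (4*(L:ℝ)+5)*x^2 + 2*x^3)) /
    (((m:ℝ)+2)*(2*(m:ℝ)+2*(L:ℝ)+1))

noncomputable def GB (L m j : ℕ) : ℝ := QB L m (j:ℝ) * UB L m j / (2*(L:ℝ) + (m:ℝ) + (j:ℝ))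

noncomputable def c0B (L m : ℕ) : ℝ :=
  -((m:ℝ)*(2*(m:ℝ)+2*(L:ℝ)-1)*((m:ℝ)+2*(L:ℝ)-2)) /
    (((m:ℝ)+2)*(2*(m:ℝ)+2*(L:ℝ)+1)*((m:ℝ)+2*(L:ℝ)))

lemma TBb_succ (L m j : ℕ) : TBb L (m+1) j = UB L m j := by
  unfold TBb UB
  have h1 : (1 - ((m+1:ℕ):ℝ)) = -(m:ℝ) := by push_cast; ring
  have h2 : (2*(L:ℝ) + ((m+1:ℕ):ℝ)) = 2*(L:ℝ) + (m:ℝ) + 1 := by push_cast; ring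
  rw [h1, h2]

set_option maxHeartbeats 2000000 in
lemma pointB (L m j : ℕ) (hL : 2 ≤ L) (hm : 1 ≤ m) :
    c0B L m * TBb L m j + UB L m j = GB L m (j+1) - GB L m j := by
  have hL' : (2:ℝ) ≤ (L:ℝ) := by exact_mod_cast hL
  have hm' : (1:ℝ) ≤ (m:ℝ) := by exact_mod_cast hm
  have hj : (0:ℝ) ≤ (j:ℝ) := Nat.cast_nonneg j
  have hm0 : (m:ℝ) ≠ 0 := by linarith
  have hcj : (2*(L:ℝ) + (m:ℝ) + (j:ℝ)) ≠ 0 := by linarith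
  have hcj1 : (2*(L:ℝ) + (m:ℝ) + ((j:ℝ)+1)) ≠ 0 := by linarith
  have hD1 : pochR ((L:ℝ) + 1) j ≠ 0 := ne_of_gt (pochR_pos (by linarith) j)
  have hD2 : pochR ((L:ℝ) + 3/2) j ≠ 0 := ne_of_gt (pochR_pos (by linarith) j)
  have hD3 : pochR (3:ℝ) j ≠ 0 := ne_of_gt (pochR_pos (by norm_num) j)
  have hden1 : ((m:ℝ)+2) ≠ 0 := by linarith
  have hden2 : (2*(m:ℝ)+2*(L:ℝ)+1) ≠ 0 := by linarith
  have hden3 : ((m:ℝ)+2*(L:ℝ)) ≠ 0 := by linarith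
  have h1 : pochR (1 - (m:ℝ)) j = ((m:ℝ) - (j:ℝ)) * pochR (-(m:ℝ)) j / (m:ℝ) := by
    rw [eq_div_iff hm0]; linear_combination pochR_neg m j
  have h2 : pochR (2*(L:ℝ) + (m:ℝ)) j
      = (2*(L:ℝ) + (m:ℝ)) * pochR (2*(L:ℝ) + (m:ℝ) + 1) j / (2*(L:ℝ) + (m:ℝ) + (j:ℝ)) := by
    have hs := pochR_shift (2*(L:ℝ) + (m:ℝ)) j
    rw [eq_div_iff hcj]; linear_combination hs
  unfold GB UB TBb QB c0B
  rw [h1, h2]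
  simp only [pochR_succ]
  push_cast
  generalize pochR (-(m:ℝ)) j = A
  generalize pochR (5/2 : ℝ) j = B
  generalize pochR (2*(L:ℝ) + (m:ℝ) + 1) j = C
  generalize hA1 : pochR ((L:ℝ) + 1) j = D1 at hD1 ⊢
  generalize hA2 : pochR ((L:ℝ) + 3/2) j = D2 at hD2 ⊢
  generalize hA3 : pochR (3:ℝ) j = D3 at hD3 ⊢
  field_simp
  ring

lemma TBb_diag (L m : ℕ) (hm : 1 ≤ m) : TBb L m m = 0 := by
  unfold TBb
  rw [pochR_one_sub_self m hm]
  simp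

lemma UB_top (L m : ℕ) : UB L m (m+1) = 0 := by
  unfold UB
  rw [pochR_negnat_succ]
  simp

lemma UB_zero (L m : ℕ) : UB L m 0 = 1 := by
  unfold UB
  simp [pochR_zero]

lemma sumB_rec (L m : ℕ) (hL : 2 ≤ L) (hm : 1 ≤ m) :
    ∑ j ∈ Finset.range (m+1), TBb L (m+1) j
      = -(QB L m 0 / (2*(L:ℝ) + (m:ℝ))) - c0B L m * ∑ j ∈ Finset.range m, TBb L m j := by
  have key : ∀ j, TBb L (m+1) j = (GB L m (j+1) - GB L m j) - c0B L m * TBb L m j := by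
    intro j
    have := pointB L m j hL hm
    rw [TBb_succ]
    linarith [this]
  rw [Finset.sum_congr rfl (fun j _ => key j), Finset.sum_sub_distrib, Finset.sum_range_sub,
    ← Finset.mul_sum, Finset.sum_range_succ, TBb_diag L m hm]
  have hG1 : GB L m (m+1) = 0 := by unfold GB; rw [UB_top]; simp
  have hG0 : GB L m 0 = QB L m 0 / (2*(L:ℝ) + (m:ℝ)) := by
    unfold GB; rw [UB_zero]; push_cast; ring
  rw [hG1, hG0]
  push_cast
  ring

lemma sumB_closed (L : ℕ) (hL : 2 ≤ L) :
    ∀ m : ℕ, 1 ≤ m → ∑ j ∈ Finset.range m, TBb L m j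
      = 2*(L:ℝ)*(2*(L:ℝ)+1)*(2*(m:ℝ)+6*(L:ℝ)-5) /
        (3*(2*(L:ℝ)+(m:ℝ)-1)*(2*(L:ℝ)+(m:ℝ)-2)*(2*(L:ℝ)+2*(m:ℝ)-1)) := by
  have hL' : (2:ℝ) ≤ (L:ℝ) := by exact_mod_cast hL
  intro m
  induction m with
  | zero => omega
  | succ k ih =>
      intro _
      by_cases hk : 1 ≤ k
      · have hk' : (1:ℝ) ≤ (k:ℝ) := by exact_mod_cast hk
        rw [sumB_rec L k hL hk, ih hk]
        unfold QB c0B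
        push_cast
        have d1 : ((k:ℝ)+2) ≠ 0 := by linarith
        have d2 : (2*(k:ℝ)+2*(L:ℝ)+1) ≠ 0 := by linarith
        have d3 : ((k:ℝ)+2*(L:ℝ)) ≠ 0 := by linarith
        have d4 : (2*(L:ℝ)+(k:ℝ)) ≠ 0 := by linarith
        have d5 : (2*(L:ℝ)+(k:ℝ)-1) ≠ 0 := by linarith
        have d6 : (2*(L:ℝ)+(k:ℝ)-2) ≠ 0 := by linarith
        have d7 : (2*(L:ℝ)+2*(k:ℝ)-1) ≠ 0 := by linarith
        have d8 : (2*(L:ℝ)+((k:ℝ)+1)-1) ≠ 0 := by linarith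
        have d9 : (2*(L:ℝ)+((k:ℝ)+1)-2) ≠ 0 := by linarith
        have d10 : (2*(L:ℝ)+2*((k:ℝ)+1)-1) ≠ 0 := by linarith
        have e1 : (L:ℝ)*2+k-1 ≠ 0 := by linarith
        have e2 : (L:ℝ)*2+k-2 ≠ 0 := by linarith
        have e3 : (L:ℝ)*2+k*2-1 ≠ 0 := by linarith
        have e4 : (L:ℝ)*2+(k+1)-1 ≠ 0 := by linarith
        have e5 : (L:ℝ)*2+(k+1)-2 ≠ 0 := by linarith
        have e6 : (L:ℝ)*2+(k+1)*2-1 ≠ 0 := by linarith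
        have e7 : (k:ℝ)*2+(L:ℝ)*2+1 ≠ 0 := by linarith
        have e8 : (k:ℝ)+(L:ℝ)*2 ≠ 0 := by linarith
        have e9 : (L:ℝ)*2+k ≠ 0 := by linarith
        have e10 : 2*((L:ℝ)+k)-1 ≠ 0 := by linarith
        have e11 : 2*((L:ℝ)+(k+1))-1 ≠ 0 := by linarith
        field_simp
        ring
      · have hk0 : k = 0 := by omega
        subst hk0
        rw [Finset.sum_range_one]
        unfold TBb
        simp only [pochR_zero]
        push_cast
        have d7 : (2*(L:ℝ)+1-1) ≠ 0 := by linarith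
        have d8 : (2*(L:ℝ)+1-2) ≠ 0 := by linarith
        have d9 : (2*(L:ℝ)+2-1) ≠ 0 := by linarith
        have e1 : (L:ℝ)*2+1-2 ≠ 0 := by linarith
        have e2 : (L:ℝ) ≠ 0 := by linarith
        have e3 : (L:ℝ)*2+2-1 ≠ 0 := by linarith
        have e4 : (L:ℝ)*2+1 ≠ 0 := by linarith
        have e5 : 2*((L:ℝ)+1)-1 ≠ 0 := by linarith
        field_simp
        ring

lemma Ecoef0_B (L m : ℕ) (hL : 2 ≤ L) (hm : 1 ≤ m) :
    Ecoef0 (1/2) (1/2) L m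
      = -((2*(m:ℝ) + 6*(L:ℝ) - 5) / ((2*(L:ℝ) + (m:ℝ) - 1) * (2*(L:ℝ) + (m:ℝ) - 2))) := by
  have hL' : (2:ℝ) ≤ (L:ℝ) := by exact_mod_cast hL
  have hm' : (1:ℝ) ≤ (m:ℝ) := by exact_mod_cast hm
  have hsum : (∑ j ∈ Finset.range m,
      (pochR (1 - (m:ℝ)) j * pochR ((1/2 : ℝ) + 2) j *
        pochR (2*(L:ℝ) + 2*(1/2 : ℝ) + (m:ℝ) - 1) j) /
      (pochR ((L:ℝ) + 1) j * pochR ((L:ℝ) + (1/2 : ℝ) + 1) j * pochR (2*(1/2 : ℝ) + 2) j))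
      = ∑ j ∈ Finset.range m, TBb L m j := by
    apply Finset.sum_congr rfl
    intro j _
    unfold TBb
    norm_num
    ring_nf
  rw [Ecoef0, hsum, sumB_closed L hL m hm]
  rw [neg_mul, neg_inj, div_mul_div_comm, div_eq_div_iff]
  · ring
  · have g1 : (0:ℝ) < (L:ℝ) := by linarith
    have g2 : (0:ℝ) < (L:ℝ) + (1/2 : ℝ) := by linarith
    have g3 : (0:ℝ) < (2*(1/2:ℝ)+1) := by norm_num
    have g4 : (0:ℝ) < (2*(L:ℝ)+(m:ℝ)-1) := by linarith
    have g5 : (0:ℝ) < (2*(L:ℝ)+(m:ℝ)-2) := by linarith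
    have g6 : (0:ℝ) < (2*(L:ℝ)+2*(m:ℝ)-1) := by linarith
    have g7 : (0:ℝ) < (3:ℝ) := by norm_num
    exact ne_of_gt (by positivity)
  · have g4 : (0:ℝ) < (2*(L:ℝ)+(m:ℝ)-1) := by linarith
    have g5 : (0:ℝ) < (2*(L:ℝ)+(m:ℝ)-2) := by linarith
    exact ne_of_gt (by positivity)

noncomputable def TD (L m j : ℕ) : ℝ :=
  pochR (1 - (m:ℝ)) j * pochR (3/2) j * pochR (2*(L:ℝ) + (m:ℝ) - 1) j /
  (pochR ((L:ℝ) + 1) j * pochR ((L:ℝ) + 1/2) j * pochR 2 j)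

noncomputable def UD (L m j : ℕ) : ℝ :=
  pochR (-(m:ℝ)) j * pochR (3/2) j * pochR (2*(L:ℝ) + (m:ℝ)) j /
  (pochR ((L:ℝ) + 1) j * pochR ((L:ℝ) + 1/2) j * pochR 2 j)

noncomputable def QD (L m : ℕ) (x : ℝ) : ℝ :=
  -((L:ℝ)*(2*(L:ℝ)-1) + (2*(L:ℝ)^2+3*(L:ℝ)-1)*x + (4*(L:ℝ)+1)*x^2 + 2*x^3) /
    (((m:ℝ)+1)*((m:ℝ)+(L:ℝ)))

noncomputable def GD (L m j : ℕ) : ℝ := QD L m (j:ℝ) * UD L m j / (2*(L:ℝ) + (m:ℝ) - 1 + (j:ℝ))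

noncomputable def c0D (L m : ℕ) : ℝ :=
  -((m:ℝ)*((m:ℝ)+(L:ℝ)-1)*((m:ℝ)+2*(L:ℝ)-2)) / (((m:ℝ)+1)*((m:ℝ)+(L:ℝ))*((m:ℝ)+2*(L:ℝ)-1))

lemma TD_succ (L m j : ℕ) : TD L (m+1) j = UD L m j := by
  unfold TD UD
  have h1 : (1 - ((m+1:ℕ):ℝ)) = -(m:ℝ) := by push_cast; ring
  have h2 : (2*(L:ℝ) + ((m+1:ℕ):ℝ) - 1) = 2*(L:ℝ) + (m:ℝ) := by push_cast; ring
  rw [h1, h2]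

set_option maxHeartbeats 2000000 in
lemma pointD (L m j : ℕ) (hL : 2 ≤ L) (hm : 1 ≤ m) :
    c0D L m * TD L m j + UD L m j = GD L m (j+1) - GD L m j := by
  have hL' : (2:ℝ) ≤ (L:ℝ) := by exact_mod_cast hL
  have hm' : (1:ℝ) ≤ (m:ℝ) := by exact_mod_cast hm
  have hj : (0:ℝ) ≤ (j:ℝ) := Nat.cast_nonneg j
  have hm0 : (m:ℝ) ≠ 0 := by linarith
  have hcj : (2*(L:ℝ) + (m:ℝ) - 1 + (j:ℝ)) ≠ 0 := by linarith
  have hcj1 : (2*(L:ℝ) + (m:ℝ) - 1 + ((j:ℝ)+1)) ≠ 0 := by linarith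
  have hD1 : pochR ((L:ℝ) + 1) j ≠ 0 := ne_of_gt (pochR_pos (by linarith) j)
  have hD2 : pochR ((L:ℝ) + 1/2) j ≠ 0 := ne_of_gt (pochR_pos (by linarith) j)
  have hD3 : pochR (2:ℝ) j ≠ 0 := ne_of_gt (pochR_pos (by norm_num) j)
  have hden1 : ((m:ℝ)+1) ≠ 0 := by linarith
  have hden2 : ((m:ℝ)+(L:ℝ)) ≠ 0 := by linarith
  have hden3 : ((m:ℝ)+2*(L:ℝ)-1) ≠ 0 := by linarith
  have h1 : pochR (1 - (m:ℝ)) j = ((m:ℝ) - (j:ℝ)) * pochR (-(m:ℝ)) j / (m:ℝ) := by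
    rw [eq_div_iff hm0]; linear_combination pochR_neg m j
  have h2 : pochR (2*(L:ℝ) + (m:ℝ) - 1) j
      = (2*(L:ℝ) + (m:ℝ) - 1) * pochR (2*(L:ℝ) + (m:ℝ)) j / (2*(L:ℝ) + (m:ℝ) - 1 + (j:ℝ)) := by
    have hs := pochR_shift (2*(L:ℝ) + (m:ℝ) - 1) j
    rw [show (2*(L:ℝ) + (m:ℝ) - 1 + 1) = 2*(L:ℝ) + (m:ℝ) from by ring] at hs
    rw [eq_div_iff hcj]; linear_combination hs
  unfold GD UD TD QD c0D
  rw [h1, h2]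
  simp only [pochR_succ]
  push_cast
  generalize pochR (-(m:ℝ)) j = A
  generalize pochR (3/2 : ℝ) j = B
  generalize pochR (2*(L:ℝ) + (m:ℝ)) j = C
  generalize hA1 : pochR ((L:ℝ) + 1) j = D1 at hD1 ⊢
  generalize hA2 : pochR ((L:ℝ) + 1/2) j = D2 at hD2 ⊢
  generalize hA3 : pochR (2:ℝ) j = D3 at hD3 ⊢
  have e1 : (L:ℝ)*2+m-1+j ≠ 0 := by linarith
  have e2 : (L:ℝ)*2+m-1+(j+1) ≠ 0 := by linarith
  have e3 : (m:ℝ)+(L:ℝ)*2-1 ≠ 0 := by linarith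
  field_simp
  ring

lemma TD_diag (L m : ℕ) (hm : 1 ≤ m) : TD L m m = 0 := by
  unfold TD
  rw [pochR_one_sub_self m hm]
  simp

lemma UD_top (L m : ℕ) : UD L m (m+1) = 0 := by
  unfold UD
  rw [pochR_negnat_succ]
  simp

lemma UD_zero (L m : ℕ) : UD L m 0 = 1 := by
  unfold UD
  simp [pochR_zero]

lemma sumD_rec (L m : ℕ) (hL : 2 ≤ L) (hm : 1 ≤ m) :
    ∑ j ∈ Finset.range (m+1), TD L (m+1) j
      = -(QD L m 0 / (2*(L:ℝ) + (m:ℝ) - 1)) - c0D L m * ∑ j ∈ Finset.range m, TD L m j := by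
  have key : ∀ j, TD L (m+1) j = (GD L m (j+1) - GD L m j) - c0D L m * TD L m j := by
    intro j
    have := pointD L m j hL hm
    rw [TD_succ]
    linarith [this]
  rw [Finset.sum_congr rfl (fun j _ => key j), Finset.sum_sub_distrib, Finset.sum_range_sub,
    ← Finset.mul_sum, Finset.sum_range_succ, TD_diag L m hm]
  have hG1 : GD L m (m+1) = 0 := by unfold GD; rw [UD_top]; simp
  have hG0 : GD L m 0 = QD L m 0 / (2*(L:ℝ) + (m:ℝ) - 1) := by
    unfold GD; rw [UD_zero]; push_cast; ring
  rw [hG1, hG0]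
  push_cast
  ring

lemma sumD_closed (L : ℕ) (hL : 2 ≤ L) :
    ∀ m : ℕ, 1 ≤ m → ∑ j ∈ Finset.range m, TD L m j
      = (L:ℝ)*(2*(L:ℝ)-1) / (((L:ℝ)+(m:ℝ)-1)*(2*(L:ℝ)+(m:ℝ)-2)) := by
  have hL' : (2:ℝ) ≤ (L:ℝ) := by exact_mod_cast hL
  intro m
  induction m with
  | zero => omega
  | succ k ih =>
      intro _
      by_cases hk : 1 ≤ k
      · have hk' : (1:ℝ) ≤ (k:ℝ) := by exact_mod_cast hk
        rw [sumD_rec L k hL hk, ih hk]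
        unfold QD c0D
        push_cast
        have d1 : ((k:ℝ)+1) ≠ 0 := by linarith
        have d2 : ((k:ℝ)+(L:ℝ)) ≠ 0 := by linarith
        have d3 : (2*(L:ℝ)+(k:ℝ)-1) ≠ 0 := by linarith
        have d4 : ((L:ℝ)+(k:ℝ)-1) ≠ 0 := by linarith
        have d5 : (2*(L:ℝ)+(k:ℝ)-2) ≠ 0 := by linarith
        have d6 : ((k:ℝ)+2*(L:ℝ)-1) ≠ 0 := by linarith
        have d7 : ((L:ℝ)+((k:ℝ)+1)-1) ≠ 0 := by linarith
        have d8 : (2*(L:ℝ)+((k:ℝ)+1)-2) ≠ 0 := by linarith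
        have e1 : (L:ℝ)*2+k-1 ≠ 0 := by linarith
        have e2 : (L:ℝ)*2+k-2 ≠ 0 := by linarith
        have e3 : (k:ℝ)+(L:ℝ)*2-1 ≠ 0 := by linarith
        have e4 : (L:ℝ)*2+(k+1)-2 ≠ 0 := by linarith
        field_simp
        ring
      · have hk0 : k = 0 := by omega
        subst hk0
        rw [Finset.sum_range_one]
        unfold TD
        simp only [pochR_zero]
        push_cast
        have d7 : ((L:ℝ)+1-1) ≠ 0 := by linarith
        have d8 : (2*(L:ℝ)+1-2) ≠ 0 := by linarith
        have e1 : (L:ℝ)*2+1-2 ≠ 0 := by linarith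
        have e2 : (L:ℝ) ≠ 0 := by linarith
        field_simp
        ring

lemma Ecoef0_D (L m : ℕ) (hL : 2 ≤ L) (hm : 1 ≤ m) :
    Ecoef0 (-1/2) 0 L m = -(2 / (2*(L:ℝ) + (m:ℝ) - 2)) := by
  have hL' : (2:ℝ) ≤ (L:ℝ) := by exact_mod_cast hL
  have hm' : (1:ℝ) ≤ (m:ℝ) := by exact_mod_cast hm
  have hsum : (∑ j ∈ Finset.range m,
      (pochR (1 - (m:ℝ)) j * pochR ((-1/2 : ℝ) + 2) j *
        pochR (2*(L:ℝ) + 2*(0:ℝ) + (m:ℝ) - 1) j) /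
      (pochR ((L:ℝ) + 1) j * pochR ((L:ℝ) + (-1/2 : ℝ) + 1) j * pochR (2*(0:ℝ) + 2) j))
      = ∑ j ∈ Finset.range m, TD L m j := by
    apply Finset.sum_congr rfl
    intro j _
    unfold TD
    norm_num
    ring_nf
  rw [Ecoef0, hsum, sumD_closed L hL m hm]
  rw [neg_mul, neg_inj, div_mul_div_comm, div_eq_div_iff]
  · ring
  · have g1 : (0:ℝ) < (L:ℝ) := by linarith
    have g2 : (0:ℝ) < (L:ℝ) + (-1/2 : ℝ) := by linarith
    have g3 : (0:ℝ) < (2*(0:ℝ)+1) := by norm_num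
    have g4 : (0:ℝ) < ((L:ℝ)+(m:ℝ)-1) := by linarith
    have g5 : (0:ℝ) < (2*(L:ℝ)+(m:ℝ)-2) := by linarith
    exact ne_of_gt (by positivity)
  · have g5 : (0:ℝ) < (2*(L:ℝ)+(m:ℝ)-2) := by linarith
    exact ne_of_gt g5

/-- **Elementary closed forms of the transition coefficients `E(m,0)`, `m ≥ 1`, in the
three distinguished cases C, B, D** (Theorem 7.1(ii) of the paper). -/
theorem Ecoef0_closed_forms (L m : ℕ) (hL : 2 ≤ L) (hm : 1 ≤ m) :
    Ecoef0 (1/2) 1 L m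
      = -(2 * ((m:ℝ) + 4*(L:ℝ) - 3) * ((L:ℝ) + (m:ℝ)) /
          ((2*(L:ℝ) + (m:ℝ)) * (2*(L:ℝ) + (m:ℝ) - 1) * (2*(L:ℝ) + (m:ℝ) - 2))) ∧
    Ecoef0 (1/2) (1/2) L m
      = -((2*(m:ℝ) + 6*(L:ℝ) - 5) / ((2*(L:ℝ) + (m:ℝ) - 1) * (2*(L:ℝ) + (m:ℝ) - 2))) ∧
    Ecoef0 (-1/2) 0 L m
      = -(2 / (2*(L:ℝ) + (m:ℝ) - 2)) := by
  exact ⟨Ecoef0_C L m hL hm, Ecoef0_B L m hL hm, Ecoef0_D L m hL hm⟩
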